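/- Let 0<s<1 and 0<r<1 with r > 2s, and define u:ℝ→ℝ by u(x) = -1 for x<-1, u(x) = -|x|^r for -1≤x<0, u(x) = x^r for 0≤x≤1, and u(x) = 1 for x>1. Let H(x) := ∫_{ℝ∖(-1/2,1/2)} (u(x+y) - u(x)) |y|^{-1-2s} dy for x ≥ 0. Then the map t ↦ H(t^{1/r}) is Lipschitz continuous on [0, 2^{-r}]. -/

import Mathlib

open MeasureTheory Filter Set

lemma rpow_mvt (p M : ℝ) (T : Set ℝ) (hT : Convex ℝ T)
    (hd : ∀ z ∈ T, z ≠ 0 ∨ 1 ≤ p)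
    (hb : ∀ z ∈ T, |p * z ^ (p - 1)| ≤ M)
    {a b : ℝ} (ha : a ∈ T) (hbT : b ∈ T) :
    |b ^ p - a ^ p| ≤ M * |b - a| := by
  have h := hT.norm_image_sub_le_of_norm_hasDerivWithin_le
    (f := fun z : ℝ => z ^ p) (f' := fun z : ℝ => p * z ^ (p - 1))
    (fun z hz => (Real.hasDerivAt_rpow_const (hd z hz)).hasDerivWithinAt)
    (fun z hz => by rw [Real.norm_eq_abs]; exact hb z hz) ha hbT
  simpa only [Real.norm_eq_abs] using h

set_option maxHeartbeats 1000000 in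
theorem stmt7 (s r : ℝ) (hs0 : 0 < s) (hs1 : s < 1) (hr0 : 0 < r) (hr1 : r < 1)
    (hrs : 2 * s < r)
    (u : ℝ → ℝ)
    (hu1 : ∀ x : ℝ, x < -1 → u x = -1)
    (hu2 : ∀ x : ℝ, -1 ≤ x → x < 0 → u x = -(|x| ^ r))
    (hu3 : ∀ x : ℝ, 0 ≤ x → x ≤ 1 → u x = x ^ r)
    (hu4 : ∀ x : ℝ, 1 < x → u x = 1)
    (H : ℝ → ℝ)
    (hH : ∀ x : ℝ, 0 ≤ x →
      H x = ∫ y in {y : ℝ | 1 / 2 ≤ |y|}, (u (x + y) - u x) / |y| ^ (1 + 2 * s)) :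
    ∃ K : NNReal, LipschitzOnWith K (fun t : ℝ => H (t ^ (1 / r)))
      (Set.Icc 0 ((2 : ℝ) ^ (-r))) := by
  set S : Set ℝ := {y : ℝ | 1 / 2 ≤ |y|} with hSdef
  set e : ℝ := 1 + 2 * s with hedef
  have he1 : 1 < e := by rw [hedef]; linarith
  have he3 : e ≤ 3 := by rw [hedef]; linarith
  have Sdecomp : S = Iic (-(1/2) : ℝ) ∪ Ici (1/2 : ℝ) := by
    ext y
    simp only [hSdef, mem_setOf_eq, mem_union, mem_Iic, mem_Ici, le_abs, le_neg]
    tauto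
  have hsm : MeasurableSet S := by
    rw [Sdecomp]; exact measurableSet_Iic.union measurableSet_Ici
  have hu_eq : u = fun z => if z < 0 then (if z < -1 then (-1:ℝ) else -(|z| ^ r))
      else (if z ≤ 1 then z ^ r else 1) := by
    funext z
    rcases lt_or_ge z 0 with h0 | h0
    · rcases lt_or_ge z (-1) with h1 | h1
      · simp [h0, h1, hu1 z h1]
      · simp [h0, not_lt.2 h1, hu2 z h1 h0]
    · rcases le_or_gt z 1 with h1 | h1
      · simp [not_lt.2 h0, h1, hu3 z h0 h1]
      · simp [not_lt.2 h0, not_le.2 h1, hu4 z h1]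
  have u_meas : Measurable u := by
    rw [hu_eq]
    apply Measurable.ite (measurableSet_lt measurable_id measurable_const)
    · apply Measurable.ite (measurableSet_lt measurable_id measurable_const)
      · exact measurable_const
      · fun_prop
    · apply Measurable.ite (measurableSet_le measurable_id measurable_const)
      · fun_prop
      · exact measurable_const
  have u_ge : ∀ z : ℝ, -1 ≤ u z := by
    intro z
    rcases lt_or_ge z 0 with h0 | h0
    · rcases lt_or_ge z (-1) with h1 | h1
      · rw [hu1 z h1]
      · rw [hu2 z h1 h0]
        have h2 : |z| ≤ 1 := by rw [abs_of_neg h0]; linarith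
        have := Real.rpow_le_one (abs_nonneg z) h2 hr0.le
        linarith
    · rcases le_or_gt z 1 with h1 | h1
      · rw [hu3 z h0 h1]
        have := Real.rpow_nonneg h0 r
        linarith
      · rw [hu4 z h1]; norm_num
  have u_le : ∀ z : ℝ, u z ≤ 1 := by
    intro z
    rcases lt_or_ge z 0 with h0 | h0
    · rcases lt_or_ge z (-1) with h1 | h1
      · rw [hu1 z h1]; norm_num
      · rw [hu2 z h1 h0]
        have := Real.rpow_nonneg (abs_nonneg z) r
        linarith
    · rcases le_or_gt z 1 with h1 | h1
      · rw [hu3 z h0 h1]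
        exact Real.rpow_le_one h0 h1 hr0.le
      · rw [hu4 z h1]
  have u_abs : ∀ z : ℝ, |u z| ≤ 1 := fun z => abs_le.2 ⟨u_ge z, u_le z⟩
  have u_nonneg : ∀ z : ℝ, 0 ≤ z → 0 ≤ u z := by
    intro z h0
    rcases le_or_gt z 1 with h1 | h1
    · rw [hu3 z h0 h1]; exact Real.rpow_nonneg h0 r
    · rw [hu4 z h1]; norm_num
  have u_nonpos : ∀ z : ℝ, z ≤ 0 → u z ≤ 0 := by
    intro z h0
    rcases lt_or_ge z 0 with h | h
    · rcases lt_or_ge z (-1) with h1 | h1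
      · rw [hu1 z h1]; norm_num
      · rw [hu2 z h1 h]
        have := Real.rpow_nonneg (abs_nonneg z) r
        linarith
    · have hz : z = 0 := le_antisymm h0 h
      rw [hz, hu3 0 le_rfl (by norm_num), Real.zero_rpow hr0.ne']
  have u_neg_one : ∀ z : ℝ, z ≤ -1 → u z = -1 := by
    intro z hz
    rcases lt_or_ge z (-1) with h | h
    · exact hu1 z h
    · have hz1 : z = -1 := le_antisymm hz h
      rw [hz1, hu2 (-1) le_rfl (by norm_num)]
      norm_num
  have u_mono : Monotone u := by
    intro a b hab
    rcases lt_or_ge a (-1) with ha | ha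
    · rw [hu1 a ha]; exact u_ge b
    · rcases lt_or_ge a 0 with ha0 | ha0
      · rcases lt_or_ge b 0 with hb0 | hb0
        · rw [hu2 a ha ha0, hu2 b (ha.trans hab) hb0]
          have h1 : |b| ≤ |a| := by
            rw [abs_of_neg ha0, abs_of_neg hb0]; linarith
          exact neg_le_neg (Real.rpow_le_rpow (abs_nonneg b) h1 hr0.le)
        · have h1 := u_nonpos a ha0.le
          have h2 := u_nonneg b hb0
          linarith
      · rcases le_or_gt b 1 with hb1 | hb1
        · rw [hu3 a ha0 (hab.trans hb1), hu3 b (ha0.trans hab) hb1]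
          exact Real.rpow_le_rpow ha0 hab hr0.le
        · rw [hu4 b hb1]; exact u_le a
  have rpow_lip : ∀ a b : ℝ, 1/2 ≤ a → 1/2 ≤ b → |b ^ r - a ^ r| ≤ 2 * |b - a| := by
    intro a b ha hb
    apply rpow_mvt r 2 (Ici (1/2 : ℝ)) (convex_Ici _) _ _ ha hb
    · intro z hz; left; intro h
      rw [mem_Ici, h] at hz; norm_num at hz
    · intro z hz
      rw [mem_Ici] at hz
      have h1 : z ^ (r - 1) ≤ (1/2 : ℝ) ^ (r - 1) :=
        Real.rpow_le_rpow_of_nonpos (by norm_num) hz (by linarith)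
      have h2 : ((1:ℝ)/2) ^ (r - 1) = (2:ℝ) ^ (1 - r) := by
        rw [show ((1:ℝ)/2) = 2⁻¹ by norm_num,
          Real.inv_rpow (by norm_num), ← Real.rpow_neg (by norm_num)]
        ring_nf
      have h3 : (2:ℝ) ^ (1 - r) ≤ (2:ℝ) ^ (1:ℝ) :=
        Real.rpow_le_rpow_of_exponent_le one_le_two (by linarith)
      have h4 : (2:ℝ) ^ (1:ℝ) = 2 := Real.rpow_one 2
      have h5 : 0 ≤ z ^ (r - 1) := Real.rpow_nonneg (by linarith) _
      rw [abs_of_nonneg (by positivity)]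
      nlinarith
  have u_min : ∀ z : ℝ, 1/2 ≤ z → u z = min (z ^ r) 1 := by
    intro z hz
    rcases le_or_gt z 1 with h1 | h1
    · rw [hu3 z (by linarith) h1, min_eq_left (Real.rpow_le_one (by linarith) h1 hr0.le)]
    · rw [hu4 z h1, min_eq_right]
      calc (1:ℝ) = 1 ^ r := (Real.one_rpow r).symm
        _ ≤ z ^ r := Real.rpow_le_rpow (by norm_num) h1.le hr0.le
  have u_lip : ∀ a b : ℝ, 1/2 ≤ a → 1/2 ≤ b → |u b - u a| ≤ 2 * |b - a| := by
    intro a b ha hb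
    rw [u_min a ha, u_min b hb]
    calc |min (b ^ r) 1 - min (a ^ r) 1| ≤ max |b ^ r - a ^ r| |(1:ℝ) - 1| :=
          abs_min_sub_min_le_max _ _ _ _
      _ = |b ^ r - a ^ r| := by simp
      _ ≤ 2 * |b - a| := rpow_lip a b ha hb
  have ikIci : IntegrableOn (fun y : ℝ => |y| ^ (-e)) (Ici (1/2 : ℝ)) := by
    rw [integrableOn_Ici_iff_integrableOn_Ioi]
    have base : IntegrableOn (fun y : ℝ => y ^ (-e)) (Ioi (1/2 : ℝ)) :=
      integrableOn_Ioi_rpow_of_lt (by linarith) (by norm_num)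
    exact base.congr_fun
      (fun y hy => by
        rw [abs_of_pos (show (0:ℝ) < y from by
          rw [mem_Ioi] at hy; linarith)]) measurableSet_Ioi
  have ikIic : IntegrableOn (fun y : ℝ => |y| ^ (-e)) (Iic (-(1/2) : ℝ)) := by
    have h0 : Integrable ((Ici (1/2:ℝ)).indicator (fun y : ℝ => |y| ^ (-e))) :=
      (integrable_indicator_iff measurableSet_Ici).2 ikIci
    have h1 := h0.comp_neg
    have h2 : (fun x : ℝ => (Ici (1/2:ℝ)).indicator (fun y : ℝ => |y| ^ (-e)) (-x))
        = (Iic (-(1/2):ℝ)).indicator (fun y : ℝ => |y| ^ (-e)) := by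
      funext x
      by_cases hx : x ≤ -(1/2 : ℝ)
      · rw [indicator_of_mem (show -x ∈ Ici (1/2:ℝ) from by rw [mem_Ici]; linarith),
          indicator_of_mem (mem_Iic.2 hx), abs_neg]
      · push_neg at hx
        rw [indicator_of_notMem (show -x ∉ Ici (1/2:ℝ) from by rw [mem_Ici]; push_neg; linarith),
          indicator_of_notMem (show x ∉ Iic (-(1/2):ℝ) from by rw [mem_Iic]; push_neg; linarith)]
    rw [h2] at h1
    exact (integrable_indicator_iff measurableSet_Iic).1 h1
  have ikS : IntegrableOn (fun y : ℝ => |y| ^ (-e)) S := by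
    rw [Sdecomp]; exact ikIic.union ikIci
  have hdom : ∀ φ : ℝ → ℝ, Measurable φ → (∀ z, |φ z| ≤ 1) →
      IntegrableOn (fun y => φ y / |y| ^ e) S := by
    intro φ hm hb
    refine Integrable.mono' ikS
      ((hm.div (show Measurable fun y : ℝ => |y| ^ e by fun_prop))).aestronglyMeasurable
      (ae_of_all _ ?_)
    · intro y
      rw [Real.norm_eq_abs, abs_div, abs_of_nonneg (Real.rpow_nonneg (abs_nonneg y) e)]
      by_cases hy : y = 0
      · simp [hy, Real.zero_rpow (show e ≠ 0 by intro h; rw [h] at he1; norm_num at he1),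
          Real.zero_rpow (show -e ≠ 0 by intro h; rw [neg_eq_zero] at h; rw [h] at he1; norm_num at he1)]
      · have hpos : 0 < |y| ^ e := Real.rpow_pos_of_pos (abs_pos.2 hy) e
        rw [Real.rpow_neg (abs_nonneg y), ← one_div]
        rw [div_le_div_iff₀ hpos hpos]
        nlinarith [hb y, abs_nonneg (φ y)]
  have intu : ∀ x : ℝ, IntegrableOn (fun y => u (x + y) / |y| ^ e) S :=
    fun x => hdom _ (u_meas.comp (measurable_const.add measurable_id)) (fun z => u_abs _)
  have int1 : IntegrableOn (fun y : ℝ => 1 / |y| ^ e) S := by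
    apply hdom _ measurable_const
    intro z; norm_num
  set C : ℝ := ∫ y in S, 1 / |y| ^ e with hCdef
  have hC0 : 0 ≤ C := by
    rw [hCdef]; exact setIntegral_nonneg hsm (fun y _ => by positivity)
  set g : ℝ → ℝ := fun x => ∫ y in S, u (x + y) / |y| ^ e with hgdef
  have ubint : ∀ (c a b : ℝ), IntegrableOn (fun y => u (c + y)) (Icc a b) := by
    intro c a b
    have h1 : IntegrableOn (fun _ : ℝ => (1:ℝ)) (Icc a b) :=
      integrableOn_const measure_Icc_lt_top.ne
    exact Integrable.mono' h1
      ((u_meas.comp (measurable_const.add measurable_id)).aestronglyMeasurable)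
      (ae_of_all _ (fun y => by rw [Real.norm_eq_abs]; exact u_abs _))
  have uII : ∀ a b : ℝ, IntervalIntegrable u volume a b := by
    intro a b
    rw [intervalIntegrable_iff]
    have h1 : IntegrableOn (fun _ : ℝ => (1:ℝ)) (Set.uIoc a b) :=
      integrableOn_const (by rw [Set.uIoc]; exact measure_Ioc_lt_top.ne)
    exact Integrable.mono' h1 u_meas.aestronglyMeasurable
      (ae_of_all _ (fun y => by rw [Real.norm_eq_abs]; exact u_abs _))
  have hhalf : ∀ t : ℝ, 0 ≤ t → t ≤ (2:ℝ) ^ (-r) → t ^ (1/r) ≤ 1/2 := by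
    intro t ht0 ht1
    calc t ^ (1/r) ≤ ((2:ℝ) ^ (-r)) ^ (1/r) := Real.rpow_le_rpow ht0 ht1 (by positivity)
      _ = (2:ℝ) ^ (-r * (1/r)) := (Real.rpow_mul (by norm_num) _ _).symm
      _ = (2:ℝ) ^ (-1:ℝ) := by congr 1; field_simp
      _ = 1/2 := by rw [Real.rpow_neg_one]; norm_num
  have hfg : ∀ t : ℝ, t ∈ Icc (0:ℝ) ((2:ℝ) ^ (-r)) →
      H (t ^ (1/r)) = g (t ^ (1/r)) - t * C := by
    rintro t ⟨ht0, ht1⟩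
    have hx0 : 0 ≤ t ^ (1/r) := Real.rpow_nonneg ht0 _
    have hx2 : t ^ (1/r) ≤ 1/2 := hhalf t ht0 ht1
    have hxr : (t ^ (1/r)) ^ r = t := by
      rw [← Real.rpow_mul ht0, one_div_mul_cancel hr0.ne', Real.rpow_one]
    have hux : u (t ^ (1/r)) = t := by rw [hu3 _ hx0 (by linarith), hxr]
    rw [hH _ hx0]
    have heq : ∀ y : ℝ, (u (t ^ (1/r) + y) - u (t ^ (1/r))) / |y| ^ e
        = u (t ^ (1/r) + y) / |y| ^ e - t * (1 / |y| ^ e) := by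
      intro y; rw [hux, sub_div]; ring
    simp_rw [heq]
    rw [integral_sub (intu _) (int1.const_mul t), integral_const_mul]
  have hkey : ∀ x' x : ℝ, 0 ≤ x' → x' ≤ x → x ≤ 1/2 →
      0 ≤ g x - g x' ∧ g x - g x' ≤ (2*C + 8) * (x - x') := by
    intro x' x h0 h1 h2
    set D : ℝ → ℝ := fun y => (u (x + y) - u (x' + y)) / |y| ^ e with hDdef
    have hDsub : D = fun y => u (x + y) / |y| ^ e - u (x' + y) / |y| ^ e := by
      funext y; simp only [hDdef, sub_div]
    have hint : IntegrableOn D S := by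
      rw [hDsub]; exact (intu x).sub (intu x')
    have hgg : g x - g x' = ∫ y in S, D y := by
      rw [hgdef]
      simp only
      rw [← integral_sub (intu x) (intu x')]
      apply integral_congr_ae
      apply ae_of_all
      intro y
      simp only [hDdef, sub_div]
    have hDpos : ∀ y : ℝ, 0 ≤ D y := by
      intro y
      apply div_nonneg _ (Real.rpow_nonneg (abs_nonneg y) e)
      have := u_mono (show x' + y ≤ x + y by linarith)
      linarith
    refine ⟨by rw [hgg]; exact setIntegral_nonneg hsm (fun y _ => hDpos y), ?_⟩
    have hsub1 : Iic (-(1/2):ℝ) ⊆ S := by rw [Sdecomp]; exact subset_union_left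
    have hsub2 : Ici ((1/2):ℝ) ⊆ S := by rw [Sdecomp]; exact subset_union_right
    have hsplit : ∫ y in S, D y
        = (∫ y in Iic (-(1/2):ℝ), D y) + ∫ y in Ici ((1/2):ℝ), D y := by
      rw [Sdecomp]
      exact setIntegral_union (by
          apply Set.disjoint_left.2; intro z hz1 hz2
          rw [mem_Iic] at hz1; rw [mem_Ici] at hz2; linarith)
        measurableSet_Ici (hint.mono_set hsub1) (hint.mono_set hsub2)
    have hpos_bound : ∫ y in Ici ((1/2):ℝ), D y ≤ (2*(x - x')) * C := by
      have step1 : ∫ y in Ici ((1/2):ℝ), D y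
          ≤ ∫ y in Ici ((1/2):ℝ), (2*(x-x')) * (1 / |y| ^ e) := by
        apply setIntegral_mono_on (hint.mono_set hsub2)
          ((int1.mono_set hsub2).const_mul _) measurableSet_Ici
        intro y hy
        rw [mem_Ici] at hy
        have hy0 : (0:ℝ) < y := by linarith
        have hk : (0:ℝ) < |y| ^ e := Real.rpow_pos_of_pos (abs_pos.2 hy0.ne') e
        have hnum : u (x + y) - u (x' + y) ≤ 2 * (x - x') := by
          have h := u_lip (x' + y) (x + y) (by linarith) (by linarith)
          rw [abs_of_nonneg (by
              have := u_mono (show x' + y ≤ x + y by linarith); linarith),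
            abs_of_nonneg (by linarith)] at h
          linarith
        simp only [hDdef]
        calc (u (x + y) - u (x' + y)) / |y| ^ e ≤ (2*(x-x')) / |y| ^ e :=
              (div_le_div_iff_of_pos_right hk).2 hnum
          _ = (2*(x-x')) * (1 / |y| ^ e) := by ring
      have step2 : ∫ y in Ici ((1/2):ℝ), (2*(x-x')) * (1 / |y| ^ e) ≤ (2*(x-x')) * C := by
        rw [integral_const_mul]
        apply mul_le_mul_of_nonneg_left _ (by linarith)
        rw [hCdef]
        exact setIntegral_mono_set int1 (ae_of_all _ (fun y => by positivity))
          (HasSubset.Subset.eventuallyLE hsub2)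
      linarith
    have hneg_bound : ∫ y in Iic (-(1/2):ℝ), D y ≤ 8 * (x - x') := by
      have hdec : Iic (-(1/2):ℝ) = Iio (-(3/2):ℝ) ∪ Icc (-(3/2):ℝ) (-(1/2)) := by
        ext z
        simp only [mem_Iic, mem_union, mem_Iio, mem_Icc]
        constructor
        · intro h
          rcases lt_or_ge z (-(3/2)) with h' | h'
          · exact Or.inl h'
          · exact Or.inr ⟨h', h⟩
        · rintro (h | ⟨h1, h2⟩) <;> linarith
      have hsubIio : Iio (-(3/2):ℝ) ⊆ S := fun z hz => hsub1 (by rw [hdec]; exact Or.inl hz)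
      have hsubIcc : Icc (-(3/2):ℝ) (-(1/2)) ⊆ S := fun z hz => hsub1 (by rw [hdec]; exact Or.inr hz)
      have hzero : ∫ y in Iio (-(3/2):ℝ), D y = 0 := by
        apply setIntegral_eq_zero_of_forall_eq_zero
        intro y hy
        rw [mem_Iio] at hy
        simp only [hDdef]
        rw [u_neg_one (x + y) (by linarith), u_neg_one (x' + y) (by linarith)]
        simp
      have hsplit2 : ∫ y in Iic (-(1/2):ℝ), D y = ∫ y in Icc (-(3/2):ℝ) (-(1/2)), D y := by
        rw [hdec, setIntegral_union (by
            apply Set.disjoint_left.2; intro z hz1 hz2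
            rw [mem_Iio] at hz1; exact absurd hz2.1 (not_le.2 hz1))
          measurableSet_Icc (hint.mono_set hsubIio) (hint.mono_set hsubIcc), hzero, zero_add]
      have step1 : ∫ y in Icc (-(3/2):ℝ) (-(1/2)), D y
          ≤ ∫ y in Icc (-(3/2):ℝ) (-(1/2)), 8 * (u (x + y) - u (x' + y)) := by
        apply setIntegral_mono_on (hint.mono_set hsubIcc)
          (((ubint x _ _).sub (ubint x' _ _)).const_mul 8) measurableSet_Icc
        intro y hy
        rw [mem_Icc] at hy
        have hay : (1:ℝ)/2 ≤ |y| := by rw [abs_of_neg (by linarith)]; linarith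
        have hk1 : ((1:ℝ)/2) ^ e ≤ |y| ^ e := Real.rpow_le_rpow (by norm_num) hay (by linarith)
        have hk2 : ((1:ℝ)/8) ≤ ((1:ℝ)/2) ^ e := by
          have h38 : ((1:ℝ)/2) ^ (3:ℝ) ≤ ((1:ℝ)/2) ^ e :=
            Real.rpow_le_rpow_of_exponent_ge (by norm_num) (by norm_num) he3
          have h8 : ((1:ℝ)/2) ^ (3:ℝ) = 1/8 := by
            rw [show (3:ℝ) = ((3:ℕ):ℝ) by norm_num, Real.rpow_natCast]
            norm_num
          linarith
        have hnum0 : 0 ≤ u (x + y) - u (x' + y) := by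
          have := u_mono (show x' + y ≤ x + y by linarith)
          linarith
        simp only [hDdef]
        calc (u (x + y) - u (x' + y)) / |y| ^ e
            ≤ (u (x + y) - u (x' + y)) / (1/8) :=
              div_le_div_of_nonneg_left hnum0 (by norm_num) (by linarith)
          _ = 8 * (u (x + y) - u (x' + y)) := by ring
      have step2 : ∫ y in Icc (-(3/2):ℝ) (-(1/2)), (u (x + y) - u (x' + y)) ≤ x - x' := by
        have hIcc : ∀ c : ℝ, ∫ y in Icc (-(3/2):ℝ) (-(1/2)), u (c + y)
            = ∫ y in (-(3/2):ℝ)..(-(1/2)), u (c + y) := by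
          intro c
          rw [intervalIntegral.integral_of_le (by norm_num), integral_Icc_eq_integral_Ioc]
        rw [integral_sub (ubint x _ _) (ubint x' _ _), hIcc x, hIcc x',
          intervalIntegral.integral_comp_add_left u x, intervalIntegral.integral_comp_add_left u x']
        have hadd1 := intervalIntegral.integral_add_adjacent_intervals
          (uII (x' + -(3/2)) (x + -(3/2))) (uII (x + -(3/2)) (x + -(1/2)))
        have hadd2 := intervalIntegral.integral_add_adjacent_intervals
          (uII (x' + -(3/2)) (x' + -(1/2))) (uII (x' + -(1/2)) (x + -(1/2)))
        have hb1 : ∫ z in (x' + -(1/2))..(x + -(1/2)), u z ≤ 0 := by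
          have h := intervalIntegral.integral_mono_on
            (by linarith : x' + -(1/2) ≤ x + -(1/2)) (uII _ _)
            (intervalIntegrable_const (c := (0:ℝ)))
            (fun z hz => u_nonpos z (by
              rcases hz with ⟨_, h2⟩
              linarith))
          simpa using h
        have hb2 : -(x - x') ≤ ∫ z in (x' + -(3/2))..(x + -(3/2)), u z := by
          have h := intervalIntegral.integral_mono_on
            (by linarith : x' + -(3/2) ≤ x + -(3/2))
            (intervalIntegrable_const (c := (-1:ℝ))) (uII _ _)
            (fun z _ => u_ge z)
          rw [intervalIntegral.integral_const, smul_eq_mul] at h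
          linarith
        linarith
      calc ∫ y in Iic (-(1/2):ℝ), D y = ∫ y in Icc (-(3/2):ℝ) (-(1/2)), D y := hsplit2
        _ ≤ ∫ y in Icc (-(3/2):ℝ) (-(1/2)), 8 * (u (x + y) - u (x' + y)) := step1
        _ = 8 * ∫ y in Icc (-(3/2):ℝ) (-(1/2)), (u (x + y) - u (x' + y)) := integral_const_mul 8 _
        _ ≤ 8 * (x - x') := by linarith
    rw [hgg, hsplit]
    nlinarith [hC0]
  -- Lipschitz constant for t ↦ t^(1/r)
  set L : ℝ := (1/r) * ((2:ℝ) ^ (-r)) ^ (1/r - 1) with hLdef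
  have hL0 : 0 ≤ L := by rw [hLdef]; positivity
  have h1r : 1 ≤ 1/r := one_le_one_div hr0 hr1.le
  have hxlip : ∀ t' t : ℝ, 0 ≤ t' → t' ≤ t → t ≤ (2:ℝ) ^ (-r) →
      t ^ (1/r) - t' ^ (1/r) ≤ L * (t - t') := by
    intro t' t h0 h1 h2
    have hm := rpow_mvt (1/r) L (Icc 0 ((2:ℝ)^(-r))) (convex_Icc _ _)
      (fun z _ => Or.inr h1r)
      (by
        intro z hz
        rw [abs_of_nonneg (mul_nonneg (by positivity) (Real.rpow_nonneg hz.1 _)), hLdef]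
        apply mul_le_mul_of_nonneg_left _ (by positivity)
        exact Real.rpow_le_rpow hz.1 hz.2 (by linarith))
      (Set.mem_Icc.2 ⟨h0, h1.trans h2⟩) (Set.mem_Icc.2 ⟨h0.trans h1, h2⟩)
    rw [abs_of_nonneg (by linarith : (0:ℝ) ≤ t - t')] at hm
    calc t ^ (1/r) - t' ^ (1/r) ≤ |t ^ (1/r) - t' ^ (1/r)| := le_abs_self _
      _ ≤ L * (t - t') := hm
  set Kr : ℝ := (2*C + 8) * L + C with hKdef
  have hKr0 : 0 ≤ Kr := by rw [hKdef]; nlinarith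
  have main : ∀ a b : ℝ, a ∈ Icc (0:ℝ) ((2:ℝ)^(-r)) → b ∈ Icc (0:ℝ) ((2:ℝ)^(-r)) → b ≤ a →
      |H (a ^ (1/r)) - H (b ^ (1/r))| ≤ Kr * (a - b) := by
    intro a b ha hb hba
    rw [hfg a ha, hfg b hb]
    have hxa : b ^ (1/r) ≤ a ^ (1/r) := Real.rpow_le_rpow hb.1 hba (by positivity)
    obtain ⟨hd0, hd1⟩ := hkey (b ^ (1/r)) (a ^ (1/r))
      (Real.rpow_nonneg hb.1 _) hxa (hhalf a ha.1 ha.2)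
    have hx_le : a ^ (1/r) - b ^ (1/r) ≤ L * (a - b) := hxlip b a hb.1 hba ha.2
    have h5 : (2*C + 8) * (a ^ (1/r) - b ^ (1/r)) ≤ (2*C + 8) * (L * (a - b)) :=
      mul_le_mul_of_nonneg_left hx_le (by linarith)
    have habs : |(g (a ^ (1/r)) - a * C) - (g (b ^ (1/r)) - b * C)|
        ≤ (g (a ^ (1/r)) - g (b ^ (1/r))) + C * (a - b) := by
      rw [abs_le]
      constructor <;> nlinarith [hC0, sub_nonneg.2 hba]
    rw [hKdef]
    calc |(g (a ^ (1/r)) - a * C) - (g (b ^ (1/r)) - b * C)|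
        ≤ (g (a ^ (1/r)) - g (b ^ (1/r))) + C * (a - b) := habs
      _ ≤ ((2*C + 8) * L + C) * (a - b) := by nlinarith
  refine ⟨Real.toNNReal Kr, ?_⟩
  apply LipschitzOnWith.of_dist_le_mul
  intro t ht t' ht'
  simp only [Real.dist_eq, Real.coe_toNNReal _ hKr0]
  rcases le_total t' t with h | h
  · rw [abs_of_nonneg (by linarith : (0:ℝ) ≤ t - t')]
    exact main t t' ht ht' h
  · rw [abs_sub_comm (H _) (H _), abs_of_nonpos (by linarith : t - t' ≤ 0)]
    have := main t' t ht' ht h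
    linarith [this]
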